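/- Let E_r be the set of unit Frobenius norm Hermitian matrices lying in the descent cone of the nuclear norm at some nonzero Hermitian matrix of rank at most r. Then every Y ∈ E_r satisfies ‖Y‖_1 ≤ 2√r; equivalently, sup_{Y ∈ E_r} tr(AY) ≤ 2√r ‖A‖_∞ for every Hermitian matrix A. -/

import Mathlib

open Matrix
open scoped ComplexOrder

/-- The square root of a positive semidefinite matrix (the definition of `Matrix.PosSemidef.sqrt`
in the older Mathlib, which has since been removed). -/
noncomputable def Matrix.PosSemidef.sqrt {n : Type*} [Fintype n] [DecidableEq n] {𝕜 : Type*}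
    [RCLike 𝕜] {A : Matrix n n 𝕜} (hA : A.PosSemidef) : Matrix n n 𝕜 :=
  hA.1.eigenvectorUnitary.1 * diagonal ((↑) ∘ (√·) ∘ hA.1.eigenvalues) *
    (star hA.1.eigenvectorUnitary : Matrix n n 𝕜)

theorem Matrix.PosSemidef.sqrt_isHermitian {n : Type*} [Fintype n] [DecidableEq n] {𝕜 : Type*}
    [RCLike 𝕜] {A : Matrix n n 𝕜} (hA : A.PosSemidef) : hA.sqrt.IsHermitian := by
  unfold Matrix.PosSemidef.sqrt
  simp [IsHermitian, conjTranspose_mul, diagonal_conjTranspose, Matrix.mul_assoc,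
    Matrix.star_eq_conjTranspose, conjTranspose_conjTranspose, Pi.star_def, RCLike.star_def,
    RCLike.conj_ofReal, Function.comp_def]

/-- The singular values of a complex square matrix `A`: the eigenvalues of `√(Aᴴ A)`. -/
noncomputable def singularValues {ι : Type*} [Fintype ι] [DecidableEq ι]
    (A : Matrix ι ι ℂ) : ι → ℝ :=
  (Matrix.posSemidef_conjTranspose_mul_self A).sqrt_isHermitian.eigenvalues


/-- The Schatten `p`-norm of a complex square matrix, `p ∈ [1, ∞]`:
`(∑ σ_i(A)^p)^(1/p)` for finite `p` and `max_i σ_i(A)` for `p = ∞`. -/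
noncomputable def schattenNorm {ι : Type*} [Fintype ι] [DecidableEq ι]
    (p : ENNReal) (A : Matrix ι ι ℂ) : ℝ :=
  if p = ⊤ then ⨆ i, singularValues A i
  else (∑ i, singularValues A i ^ p.toReal) ^ (1 / p.toReal)

noncomputable section NucAux

namespace NucAux

variable {ι : Type*} [Fintype ι] [DecidableEq ι]

/-- real sign -/
def sgn (x : ℝ) : ℝ := if x < 0 then -1 else if x = 0 then 0 else 1

/-- indicator of nonzero -/
def ind (x : ℝ) : ℝ := if x = 0 then 0 else 1

lemma sgn_neg_eq (x : ℝ) (h : x < 0) : sgn x = -1 := if_pos h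
lemma sgn_zero_eq : sgn 0 = 0 := by unfold sgn; norm_num
lemma sgn_pos_eq (x : ℝ) (h : 0 < x) : sgn x = 1 := by
  unfold sgn; rw [if_neg (not_lt.mpr h.le), if_neg h.ne']
lemma ind_zero_eq : ind 0 = 0 := if_pos rfl
lemma ind_ne_eq (x : ℝ) (h : x ≠ 0) : ind x = 1 := if_neg h

lemma abs_sgn_le (x : ℝ) : |sgn x| ≤ 1 := by
  rcases lt_trichotomy x 0 with h|h|h
  · rw [sgn_neg_eq x h]; norm_num
  · rw [h, sgn_zero_eq]; norm_num
  · rw [sgn_pos_eq x h]; norm_num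

lemma abs_sgn_le_ind (x : ℝ) : |sgn x| ≤ ind x := by
  rcases lt_trichotomy x 0 with h|h|h
  · rw [sgn_neg_eq x h, ind_ne_eq x h.ne]; norm_num
  · rw [h, sgn_zero_eq, ind_zero_eq]; norm_num
  · rw [sgn_pos_eq x h, ind_ne_eq x h.ne']; norm_num

lemma sgn_mul_self_eq (x : ℝ) : sgn x * x = |x| := by
  rcases lt_trichotomy x 0 with h|h|h
  · rw [sgn_neg_eq x h, abs_of_neg h]; ring
  · rw [h, sgn_zero_eq]; norm_num
  · rw [sgn_pos_eq x h, abs_of_pos h]; ring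

lemma sgn_mul_sgn (x : ℝ) : sgn x * sgn x = ind x := by
  rcases lt_trichotomy x 0 with h|h|h
  · rw [sgn_neg_eq x h, ind_ne_eq x h.ne]; norm_num
  · rw [h, sgn_zero_eq, ind_zero_eq]; norm_num
  · rw [sgn_pos_eq x h, ind_ne_eq x h.ne']; norm_num

lemma ind_mul_ind (x : ℝ) : ind x * ind x = ind x := by
  unfold ind; split_ifs <;> norm_num

lemma sgn_mul_ind (x : ℝ) : sgn x * ind x = sgn x := by
  rcases lt_trichotomy x 0 with h|h|h
  · rw [sgn_neg_eq x h, ind_ne_eq x h.ne]; norm_num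
  · rw [h, sgn_zero_eq]; ring
  · rw [sgn_pos_eq x h, ind_ne_eq x h.ne']; norm_num

lemma mul_ind (x : ℝ) : x * ind x = x := by
  rcases eq_or_ne x 0 with h|h
  · rw [h]; ring
  · rw [ind_ne_eq x h]; ring

lemma ind_nonneg (x : ℝ) : 0 ≤ ind x := by unfold ind; split_ifs <;> norm_num

lemma ind_le_one (x : ℝ) : ind x ≤ 1 := by unfold ind; split_ifs <;> norm_num

/-- conjugation of a real diagonal by a matrix -/
def conjD (V : Matrix ι ι ℂ) (c : ι → ℝ) : Matrix ι ι ℂ :=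
  V * diagonal (fun i => (c i : ℂ)) * Vᴴ

lemma conjD_isHermitian (V : Matrix ι ι ℂ) (c : ι → ℝ) : (conjD V c).IsHermitian := by
  unfold conjD
  exact isHermitian_mul_mul_conjTranspose V (isHermitian_diagonal_of_self_adjoint _
    (funext fun i => by simp [Pi.star_apply, Complex.star_def, Complex.conj_ofReal]))

lemma conjD_mul_conjD {V : Matrix ι ι ℂ} (hV : Vᴴ * V = 1) (c c' : ι → ℝ) :
    conjD V c * conjD V c' = conjD V (fun i => c i * c' i) := by
  unfold conjD
  calc (V * diagonal (fun i => (c i : ℂ)) * Vᴴ) * (V * diagonal (fun i => (c' i : ℂ)) * Vᴴ)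
      = V * diagonal (fun i => (c i : ℂ)) * (Vᴴ * V) * diagonal (fun i => (c' i : ℂ)) * Vᴴ := by
        simp only [Matrix.mul_assoc]
    _ = V * (diagonal (fun i => (c i : ℂ)) * diagonal (fun i => (c' i : ℂ))) * Vᴴ := by
        rw [hV]; simp only [Matrix.mul_one, Matrix.mul_assoc]
    _ = V * diagonal (fun i => ((c i * c' i : ℝ) : ℂ)) * Vᴴ := by
        rw [diagonal_mul_diagonal]
        congr 1
        · congr 1; ext i; push_cast; ring

lemma trace_conjD {V : Matrix ι ι ℂ} (hV : Vᴴ * V = 1) (c : ι → ℝ) :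
    trace (conjD V c) = ∑ i, (c i : ℂ) := by
  unfold conjD
  rw [trace_mul_cycle, hV, Matrix.one_mul, trace_diagonal]

lemma trace_conjD_mul (V : Matrix ι ι ℂ) (c : ι → ℝ) (M : Matrix ι ι ℂ) :
    trace (conjD V c * M) = ∑ i, (c i : ℂ) * (Vᴴ * M * V) i i := by
  unfold conjD
  have h1 : V * diagonal (fun i => (c i : ℂ)) * Vᴴ * M
      = V * diagonal (fun i => (c i : ℂ)) * (Vᴴ * M) := by simp only [Matrix.mul_assoc]
  rw [h1, trace_mul_comm, ← Matrix.mul_assoc]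
  rw [Matrix.trace]
  simp only [diag_apply, Matrix.mul_diagonal]
  exact Finset.sum_congr rfl fun i _ => by ring

lemma re_trace_conjD_mul (V : Matrix ι ι ℂ) (c : ι → ℝ) (M : Matrix ι ι ℂ) :
    (trace (conjD V c * M)).re = ∑ i, c i * ((Vᴴ * M * V) i i).re := by
  rw [trace_conjD_mul, Complex.re_sum]
  exact Finset.sum_congr rfl fun i _ => by simp [Complex.mul_re]


/-- complex quadratic form -/
def qfC (G : Matrix ι ι ℂ) (v : ι → ℂ) : ℂ := star v ⬝ᵥ (G *ᵥ v)

/-- real quadratic form -/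
def qf (G : Matrix ι ι ℂ) (v : ι → ℂ) : ℝ := (qfC G v).re

lemma qf_add (G H : Matrix ι ι ℂ) (v : ι → ℂ) : qf (G + H) v = qf G v + qf H v := by
  unfold qf qfC
  rw [add_mulVec, dotProduct_add, Complex.add_re]

lemma qfC_conjD (V : Matrix ι ι ℂ) (c : ι → ℝ) (v : ι → ℂ) :
    qfC (conjD V c) v = ∑ k, (c k : ℂ) * Complex.normSq ((Vᴴ *ᵥ v) k) := by
  unfold qfC conjD
  have hsv : star v ᵥ* V = star (Vᴴ *ᵥ v) := by
    rw [star_mulVec, conjTranspose_conjTranspose]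
  rw [← Matrix.mulVec_mulVec, ← Matrix.mulVec_mulVec, dotProduct_mulVec, hsv]
  unfold dotProduct
  refine Finset.sum_congr rfl fun k _ => ?_
  rw [mulVec_diagonal, Pi.star_apply, Complex.star_def]
  rw [show (starRingEnd ℂ) ((Vᴴ *ᵥ v) k) * ((c k : ℂ) * (Vᴴ *ᵥ v) k)
      = (c k : ℂ) * ((Vᴴ *ᵥ v) k * (starRingEnd ℂ) ((Vᴴ *ᵥ v) k)) by ring, Complex.mul_conj]


lemma qf_conjD (V : Matrix ι ι ℂ) (c : ι → ℝ) (v : ι → ℂ) :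
    qf (conjD V c) v = ∑ k, c k * Complex.normSq ((Vᴴ *ᵥ v) k) := by
  unfold qf
  rw [qfC_conjD, Complex.re_sum]
  refine Finset.sum_congr rfl fun k _ => ?_
  rw [show ((Complex.normSq ((Vᴴ *ᵥ v) k) : ℝ) : ℂ) = ((Complex.normSq ((Vᴴ *ᵥ v) k) : ℝ) : ℂ) from rfl]
  rw [← Complex.ofReal_mul, Complex.ofReal_re]

/-- norm preservation: for coisometry `V`. -/
lemma sum_normSq_conj_mulVec {V : Matrix ι ι ℂ} (hV : V * Vᴴ = 1) (v : ι → ℂ) :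
    ∑ k, Complex.normSq ((Vᴴ *ᵥ v) k) = (star v ⬝ᵥ v).re := by
  have h1 : ((star (Vᴴ *ᵥ v)) ⬝ᵥ (Vᴴ *ᵥ v)) = star v ⬝ᵥ v := by
    rw [star_mulVec, conjTranspose_conjTranspose, ← dotProduct_mulVec,
      Matrix.mulVec_mulVec, hV, Matrix.one_mulVec]
  have h2 : ((star (Vᴴ *ᵥ v)) ⬝ᵥ (Vᴴ *ᵥ v)).re = ∑ k, Complex.normSq ((Vᴴ *ᵥ v) k) := by
    unfold dotProduct
    rw [Complex.re_sum]
    refine Finset.sum_congr rfl fun k _ => ?_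
    rw [Pi.star_apply, Complex.star_def, ← Complex.normSq_eq_conj_mul_self,
      Complex.ofReal_re]
  rw [← h2, h1]

lemma dot_self_re_nonneg (v : ι → ℂ) : 0 ≤ (star v ⬝ᵥ v).re := by
  unfold dotProduct
  rw [Complex.re_sum]
  refine Finset.sum_nonneg fun k _ => ?_
  rw [Pi.star_apply, Complex.star_def, ← Complex.normSq_eq_conj_mul_self,
    Complex.ofReal_re]
  exact Complex.normSq_nonneg _

/-- quadratic-form bound for spectral contractions -/
lemma abs_qf_conjD_le {V : Matrix ι ι ℂ} (hV : V * Vᴴ = 1) {c : ι → ℝ}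
    (hc : ∀ k, |c k| ≤ 1) (v : ι → ℂ) : |qf (conjD V c) v| ≤ (star v ⬝ᵥ v).re := by
  rw [qf_conjD]
  calc |∑ k, c k * Complex.normSq ((Vᴴ *ᵥ v) k)|
      ≤ ∑ k, |c k * Complex.normSq ((Vᴴ *ᵥ v) k)| := Finset.abs_sum_le_sum_abs _ _
    _ ≤ ∑ k, Complex.normSq ((Vᴴ *ᵥ v) k) := by
        refine Finset.sum_le_sum fun k _ => ?_
        rw [abs_mul, abs_of_nonneg (Complex.normSq_nonneg _)]
        exact mul_le_of_le_one_left (Complex.normSq_nonneg _) (hc k)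
    _ = (star v ⬝ᵥ v).re := sum_normSq_conj_mulVec hV v

lemma qf_sandwich {Q : Matrix ι ι ℂ} (hQ : Qᴴ = Q) (G : Matrix ι ι ℂ) (v : ι → ℂ) :
    qf (Q * G * Q) v = qf G (Q *ᵥ v) := by
  unfold qf qfC
  rw [← Matrix.mulVec_mulVec, ← Matrix.mulVec_mulVec, dotProduct_mulVec]
  congr 2
  rw [star_mulVec, hQ]

/-- diagonal entries of conjugation as quadratic forms -/
lemma conj_diag_eq_qfC (V G : Matrix ι ι ℂ) (i : ι) :
    (Vᴴ * G * V) i i = qfC G (fun k => V k i) := by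
  simp only [qfC, mulVec, dotProduct, Matrix.mul_apply, conjTranspose_apply,
    Finset.sum_mul, Finset.mul_sum, Pi.star_apply]
  rw [Finset.sum_comm]
  exact Finset.sum_congr rfl fun k _ => Finset.sum_congr rfl fun j _ => by ring


section Spectral

variable {M : Matrix ι ι ℂ}

/-- coerced eigenvector unitary -/
def eigU (hM : M.IsHermitian) : Matrix ι ι ℂ :=
  (Matrix.IsHermitian.eigenvectorUnitary hM : Matrix ι ι ℂ)

lemma eigU_star_mul (hM : M.IsHermitian) : (eigU hM)ᴴ * eigU hM = 1 := by
  have h := (Matrix.mem_unitaryGroup_iff').mp (Matrix.IsHermitian.eigenvectorUnitary hM).2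
  rwa [Matrix.star_eq_conjTranspose] at h

lemma eigU_mul_star (hM : M.IsHermitian) : eigU hM * (eigU hM)ᴴ = 1 := by
  have h := (Matrix.mem_unitaryGroup_iff).mp (Matrix.IsHermitian.eigenvectorUnitary hM).2
  rwa [Matrix.star_eq_conjTranspose] at h

lemma spectral_conjD (hM : M.IsHermitian) : M = conjD (eigU hM) hM.eigenvalues := by
  have h := Matrix.IsHermitian.spectral_theorem hM
  rw [Unitary.conjStarAlgAut_apply, Matrix.star_eq_conjTranspose] at h
  exact h

lemma conj_eig_diag (hM : M.IsHermitian) :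
    (eigU hM)ᴴ * M * eigU hM = diagonal (fun i => (hM.eigenvalues i : ℂ)) := by
  have h := Matrix.IsHermitian.conjStarAlgAut_star_eigenvectorUnitary hM
  rw [Unitary.conjStarAlgAut_star_apply, Matrix.star_eq_conjTranspose] at h
  exact h

lemma herm_trace_re (hM : M.IsHermitian) : (trace M).re = ∑ i, hM.eigenvalues i := by
  conv_lhs => rw [spectral_conjD hM]
  rw [trace_conjD (eigU_star_mul hM), Complex.re_sum]
  exact Finset.sum_congr rfl fun i _ => Complex.ofReal_re _

lemma herm_trace_sq_re (hM : M.IsHermitian) :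
    (trace (M * M)).re = ∑ i, (hM.eigenvalues i)^2 := by
  conv_lhs => rw [spectral_conjD hM, conjD_mul_conjD (eigU_star_mul hM)]
  rw [trace_conjD (eigU_star_mul hM), Complex.re_sum]
  exact Finset.sum_congr rfl fun i _ => by rw [Complex.ofReal_re]; ring

lemma conj_unit_diag (hM : M.IsHermitian) (i : ι) :
    ((eigU hM)ᴴ * (1 : Matrix ι ι ℂ) * eigU hM) i i = 1 := by
  rw [Matrix.mul_one, eigU_star_mul hM, Matrix.one_apply_eq]

/-- trace-duality bound: `re tr(G M) ≤ ∑ |λᵢ(M)|` for a quadratic-form contraction `G`. -/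
lemma re_trace_mul_le (hM : M.IsHermitian) {G : Matrix ι ι ℂ}
    (hG : ∀ v : ι → ℂ, |qf G v| ≤ (star v ⬝ᵥ v).re) :
    (trace (G * M)).re ≤ ∑ i, |hM.eigenvalues i| := by
  rw [trace_mul_comm]
  conv_lhs => rw [spectral_conjD hM]
  rw [re_trace_conjD_mul]
  refine Finset.sum_le_sum fun i _ => ?_
  have h1 : ((eigU hM)ᴴ * G * eigU hM) i i = qfC G (fun k => eigU hM k i) :=
    conj_diag_eq_qfC _ _ _
  have h2 : |(((eigU hM)ᴴ * G * eigU hM) i i).re| ≤ 1 := by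
    rw [h1]
    refine le_trans (hG _) ?_
    have h3 : (star (fun k => eigU hM k i) ⬝ᵥ (fun k => eigU hM k i)) =
        ((eigU hM)ᴴ * (1 : Matrix ι ι ℂ) * eigU hM) i i := by
      rw [conj_diag_eq_qfC]
      unfold qfC
      rw [Matrix.one_mulVec]
    rw [h3, conj_unit_diag hM]
    norm_num
  calc hM.eigenvalues i * (((eigU hM)ᴴ * G * eigU hM) i i).re
      ≤ |hM.eigenvalues i * (((eigU hM)ᴴ * G * eigU hM) i i).re| := le_abs_self _
    _ = |hM.eigenvalues i| * |(((eigU hM)ᴴ * G * eigU hM) i i).re| := abs_mul _ _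
    _ ≤ |hM.eigenvalues i| * 1 := by
        exact mul_le_mul_of_nonneg_left h2 (abs_nonneg _)
    _ = |hM.eigenvalues i| := mul_one _

/-- the sign dual certificate attains the nuclear norm -/
lemma re_trace_sgn_mul (hM : M.IsHermitian) :
    (trace (conjD (eigU hM) (fun i => sgn (hM.eigenvalues i)) * M)).re
      = ∑ i, |hM.eigenvalues i| := by
  rw [re_trace_conjD_mul, conj_eig_diag hM]
  refine Finset.sum_congr rfl fun i _ => ?_
  rw [diagonal_apply_eq, Complex.ofReal_re, sgn_mul_self_eq]

end Spectral

section Fro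

/-- squared Frobenius norm -/
def froSq (M : Matrix ι ι ℂ) : ℝ := ∑ i, ∑ j, Complex.normSq (M i j)

lemma froSq_nonneg (M : Matrix ι ι ℂ) : 0 ≤ froSq M :=
  Finset.sum_nonneg fun i _ => Finset.sum_nonneg fun j _ => Complex.normSq_nonneg _

lemma re_trace_conjTranspose_mul (M : Matrix ι ι ℂ) : (trace (Mᴴ * M)).re = froSq M := by
  unfold froSq Matrix.trace
  rw [Complex.re_sum, Finset.sum_comm]
  refine Finset.sum_congr rfl fun i _ => ?_
  rw [diag_apply, Matrix.mul_apply, Complex.re_sum]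
  refine Finset.sum_congr rfl fun j _ => ?_
  rw [conjTranspose_apply, Complex.star_def, ← Complex.normSq_eq_conj_mul_self,
    Complex.ofReal_re]

/-- Cauchy–Schwarz for the Frobenius pairing -/
lemma re_trace_pair_le (G M : Matrix ι ι ℂ) :
    (trace (Gᴴ * M)).re ≤ Real.sqrt (froSq G) * Real.sqrt (froSq M) := by
  have h1 : (trace (Gᴴ * M)).re = ∑ i, ∑ j, (star (G j i) * M j i).re := by
    unfold Matrix.trace
    rw [Complex.re_sum]
    refine Finset.sum_congr rfl fun i _ => ?_
    rw [diag_apply, Matrix.mul_apply, Complex.re_sum]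
    exact Finset.sum_congr rfl fun j _ => by rw [conjTranspose_apply]
  have h2 : (trace (Gᴴ * M)).re ≤
      ∑ i, ∑ j, ‖G j i‖ * ‖M j i‖ := by
    rw [h1]
    refine Finset.sum_le_sum fun i _ => Finset.sum_le_sum fun j _ => ?_
    calc (star (G j i) * M j i).re ≤ ‖star (G j i) * M j i‖ :=
          Complex.re_le_norm _
      _ = ‖G j i‖ * ‖M j i‖ := by
          rw [norm_mul, Complex.star_def, Complex.norm_conj]
  refine le_trans h2 ?_
  have h3 : ∀ N : Matrix ι ι ℂ, ∑ i, ∑ j, (‖N j i‖)^2 = froSq N := by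
    intro N
    rw [Finset.sum_comm]
    unfold froSq
    exact Finset.sum_congr rfl fun i _ => Finset.sum_congr rfl fun j _ => Complex.sq_norm _
  have hcs : (∑ i, ∑ j, ‖G j i‖ * ‖M j i‖)^2 ≤
      froSq G * froSq M := by
    rw [← h3 G, ← h3 M]
    rw [← Finset.sum_product' (f := fun i j => ‖G j i‖ * ‖M j i‖),
      ← Finset.sum_product' (f := fun i j => (‖G j i‖)^2),
      ← Finset.sum_product' (f := fun i j => (‖M j i‖)^2)]
    exact Finset.sum_mul_sq_le_sq_mul_sq _ _ _
  have hnn : 0 ≤ ∑ i, ∑ j, ‖G j i‖ * ‖M j i‖ :=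
    Finset.sum_nonneg fun i _ => Finset.sum_nonneg fun j _ =>
      mul_nonneg (norm_nonneg _) (norm_nonneg _)
  calc ∑ i, ∑ j, ‖G j i‖ * ‖M j i‖
      = Real.sqrt ((∑ i, ∑ j, ‖G j i‖ * ‖M j i‖)^2) :=
        (Real.sqrt_sq hnn).symm
    _ ≤ Real.sqrt (froSq G * froSq M) := Real.sqrt_le_sqrt hcs
    _ = Real.sqrt (froSq G) * Real.sqrt (froSq M) := Real.sqrt_mul (froSq_nonneg G) _

end Fro


section Schatten

variable {M : Matrix ι ι ℂ}

lemma sqrt_eq_conjD' {A : Matrix ι ι ℂ} (hA : A.PosSemidef) :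
    hA.sqrt = conjD (eigU hA.1) (fun i => Real.sqrt (hA.1.eigenvalues i)) := by
  unfold Matrix.PosSemidef.sqrt conjD eigU
  rw [Matrix.star_eq_conjTranspose]
  rfl

lemma _root_.Matrix.PosSemidef.posSemidef_sqrt {A : Matrix ι ι ℂ} (hA : A.PosSemidef) :
    hA.sqrt.PosSemidef := by
  rw [sqrt_eq_conjD']
  unfold conjD
  exact (Matrix.posSemidef_diagonal_iff.mpr fun i =>
    Complex.zero_le_real.mpr (Real.sqrt_nonneg _)).mul_mul_conjTranspose_same _

lemma _root_.Matrix.PosSemidef.sqrt_mul_self {A : Matrix ι ι ℂ} (hA : A.PosSemidef) :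
    hA.sqrt * hA.sqrt = A := by
  rw [sqrt_eq_conjD', conjD_mul_conjD (eigU_star_mul hA.1)]
  conv_rhs => rw [spectral_conjD hA.1]
  exact congrArg _ (funext fun i => Real.mul_self_sqrt (hA.eigenvalues_nonneg i))

lemma cfc_eq_conjD {N : Matrix ι ι ℂ} (hN : N.IsHermitian) (f : ℝ → ℝ) :
    cfc f N = conjD (eigU hN) (fun i => f (hN.eigenvalues i)) := by
  rw [hN.cfc_eq, Matrix.IsHermitian.cfc, Unitary.conjStarAlgAut_apply,
    Matrix.star_eq_conjTranspose]
  rfl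

lemma sqrt_eq_of_herm (hM : M.IsHermitian) :
    (Matrix.posSemidef_conjTranspose_mul_self M).sqrt
      = conjD (eigU hM) (fun i => |hM.eigenvalues i|) := by
  rw [sqrt_eq_conjD']
  have hMM : Mᴴ * M = cfc (fun x : ℝ => x ^ 2) M := by
    rw [cfc_pow_id M 2 hM.isSelfAdjoint, show Mᴴ = M from hM, pow_two]
  have e1 := cfc_eq_conjD (Matrix.posSemidef_conjTranspose_mul_self M).1 Real.sqrt
  have e2 := cfc_eq_conjD hM (fun x => |x|)
  beta_reduce at e2
  rw [← e1, ← e2, hMM, ← cfc_comp' Real.sqrt (fun x : ℝ => x ^ 2) M (ha := hM.isSelfAdjoint)]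
  congr 1
  funext x
  exact Real.sqrt_sq_eq_abs x

lemma sum_singularValues_herm (hM : M.IsHermitian) :
    ∑ i, singularValues M i = ∑ i, |hM.eigenvalues i| := by
  have h0 : ∑ i, singularValues M i
      = (trace ((Matrix.posSemidef_conjTranspose_mul_self M).sqrt)).re :=
    (herm_trace_re (Matrix.posSemidef_conjTranspose_mul_self M).posSemidef_sqrt.1).symm
  rw [h0, sqrt_eq_of_herm hM, trace_conjD (eigU_star_mul hM), Complex.re_sum]
  exact Finset.sum_congr rfl fun i _ => Complex.ofReal_re _

lemma schattenNorm_one_herm (hM : M.IsHermitian) :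
    schattenNorm 1 M = ∑ i, |hM.eigenvalues i| := by
  unfold schattenNorm
  rw [if_neg ENNReal.one_ne_top, ENNReal.toReal_one,
    show (1:ℝ)/1 = 1 by norm_num]
  simp only [Real.rpow_one]
  exact sum_singularValues_herm hM

lemma schattenNorm_two_eq (A : Matrix ι ι ℂ) :
    schattenNorm 2 A = Real.sqrt (froSq A) := by
  unfold schattenNorm
  rw [if_neg ENNReal.ofNat_ne_top, ENNReal.toReal_ofNat]
  have h1 : ∑ i, singularValues A i ^ (2:ℝ) = froSq A := by
    have h2 : ∑ i, singularValues A i ^ (2:ℝ)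
        = ∑ i, ((Matrix.posSemidef_conjTranspose_mul_self A).posSemidef_sqrt.1.eigenvalues i)^2 := by
      refine Finset.sum_congr rfl fun i _ => ?_
      rw [show (2:ℝ) = ((2:ℕ):ℝ) by norm_num, Real.rpow_natCast]
      rfl
    rw [h2, ← herm_trace_sq_re (Matrix.posSemidef_conjTranspose_mul_self A).posSemidef_sqrt.1,
      (Matrix.posSemidef_conjTranspose_mul_self A).sqrt_mul_self,
      re_trace_conjTranspose_mul]
  rw [h1, ← Real.sqrt_eq_rpow]

end Schatten

section TraceAlg

lemma trace_sandwich (P1 G P2 A : Matrix ι ι ℂ) :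
    trace ((P1 * G * P2) * A) = trace (G * (P2 * A * P1)) := by
  calc trace (P1 * G * P2 * A) = trace (A * (P1 * G) * P2) := by
        rw [Matrix.trace_mul_cycle]
    _ = trace (P2 * A * (P1 * G)) := by rw [Matrix.trace_mul_cycle]
    _ = trace (G * (P2 * A * P1)) := by
        rw [← Matrix.mul_assoc, Matrix.trace_mul_comm]

lemma conj_three {P G Q : Matrix ι ι ℂ} (hP : Pᴴ = P) (hG : Gᴴ = G) (hQ : Qᴴ = Q) :
    (P * G * Q)ᴴ = Q * G * P := by
  rw [conjTranspose_mul, conjTranspose_mul, hP, hG, hQ, ← Matrix.mul_assoc]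

lemma froSq_neg (M : Matrix ι ι ℂ) : froSq (-M) = froSq M := by
  unfold froSq
  refine Finset.sum_congr rfl fun i _ => Finset.sum_congr rfl fun j _ => ?_
  rw [Matrix.neg_apply, Complex.normSq_neg]

lemma froSq_conjTranspose (M : Matrix ι ι ℂ) : froSq Mᴴ = froSq M := by
  unfold froSq
  rw [Finset.sum_comm]
  refine Finset.sum_congr rfl fun i _ => Finset.sum_congr rfl fun j _ => ?_
  rw [conjTranspose_apply, Complex.star_def, Complex.normSq_conj]

lemma qf_one (v : ι → ℂ) : qf 1 v = (star v ⬝ᵥ v).re := by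
  unfold qf qfC
  rw [Matrix.one_mulVec]

lemma qf_sub (G H : Matrix ι ι ℂ) (v : ι → ℂ) : qf (G - H) v = qf G v - qf H v := by
  unfold qf qfC
  rw [sub_mulVec, dotProduct_sub, Complex.sub_re]

lemma dot_sandwich {Q : Matrix ι ι ℂ} (hQ : Qᴴ = Q) (hQQ : Q * Q = Q) (v : ι → ℂ) :
    star (Q *ᵥ v) ⬝ᵥ (Q *ᵥ v) = qfC Q v := by
  rw [star_mulVec, hQ, ← dotProduct_mulVec, Matrix.mulVec_mulVec, hQQ]
  rfl

end TraceAlg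

section Top

variable {A : Matrix ι ι ℂ}

lemma conj_conjD {V : Matrix ι ι ℂ} (hV1 : Vᴴ * V = 1) (c : ι → ℝ) :
    Vᴴ * conjD V c * V = diagonal (fun i => (c i : ℂ)) := by
  unfold conjD
  have h : Vᴴ * (V * diagonal (fun i => (c i : ℂ)) * Vᴴ) * V
      = (Vᴴ * V) * diagonal (fun i => (c i : ℂ)) * (Vᴴ * V) := by
    simp only [Matrix.mul_assoc]
  rw [h, hV1, Matrix.one_mul, Matrix.mul_one]

lemma singularValues_nonneg (A : Matrix ι ι ℂ) (i : ι) : 0 ≤ singularValues A i :=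
  (Matrix.posSemidef_conjTranspose_mul_self A).posSemidef_sqrt.eigenvalues_nonneg i

lemma schattenNorm_top_eq (A : Matrix ι ι ℂ) :
    schattenNorm ⊤ A = ⨆ i, singularValues A i := by
  unfold schattenNorm
  rw [if_pos rfl]

lemma singularValues_le_top (A : Matrix ι ι ℂ) (i : ι) :
    singularValues A i ≤ schattenNorm ⊤ A := by
  rw [schattenNorm_top_eq]
  exact le_ciSup (Set.Finite.bddAbove (Set.finite_range _)) i

lemma schattenNorm_top_nonneg [Nonempty ι] (A : Matrix ι ι ℂ) :
    0 ≤ schattenNorm ⊤ A := by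
  obtain ⟨i⟩ := ‹Nonempty ι›
  exact le_trans (singularValues_nonneg A i) (singularValues_le_top A i)

/-- every eigenvalue of a Hermitian matrix is bounded in absolute value by the top
singular value -/
lemma eig_abs_le_top (hA : A.IsHermitian) (j : ι) :
    |hA.eigenvalues j| ≤ schattenNorm ⊤ A := by
  have hnj : Nonempty ι := ⟨j⟩
  set S : Matrix ι ι ℂ := (Matrix.posSemidef_conjTranspose_mul_self A).sqrt with hSdef
  have hS : S.PosSemidef := (Matrix.posSemidef_conjTranspose_mul_self A).posSemidef_sqrt
  have hAA : A * A = S * S := by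
    rw [hSdef, (Matrix.posSemidef_conjTranspose_mul_self A).sqrt_mul_self,
      show Aᴴ = A from hA]
  set s : ℝ := schattenNorm ⊤ A with hs
  have hs0 : 0 ≤ s := schattenNorm_top_nonneg A
  -- the quadratic form of A*A at the j-th eigenvector of A equals (λ_j)²
  set u : ι → ℂ := fun k => eigU hA k j with hu
  have h1 : ((eigU hA)ᴴ * (A * A) * eigU hA) j j = ((hA.eigenvalues j : ℂ))^2 := by
    have hAA2 : A * A = conjD (eigU hA) (fun i => hA.eigenvalues i * hA.eigenvalues i) := by
      conv_lhs => rw [spectral_conjD hA]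
      rw [conjD_mul_conjD (eigU_star_mul hA)]
    rw [hAA2, conj_conjD (eigU_star_mul hA), diagonal_apply_eq]
    push_cast
    ring
  -- and it is bounded by s²
  have h2 : |qf (S * S) u| ≤ s^2 := by
    have hSS : S * S = conjD (eigU hS.1)
        (fun i => singularValues A i * singularValues A i) := by
      conv_lhs => rw [spectral_conjD hS.1]
      rw [conjD_mul_conjD (eigU_star_mul hS.1)]
      rfl
    rw [hSS, qf_conjD]
    have hb : ∀ k, |singularValues A k * singularValues A k| ≤ s^2 := by
      intro k
      rw [abs_mul, abs_of_nonneg (singularValues_nonneg A k), pow_two]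
      exact mul_le_mul (singularValues_le_top A k) (singularValues_le_top A k)
        (singularValues_nonneg A k) hs0
    have hun : ∑ k, Complex.normSq (((eigU hS.1)ᴴ *ᵥ u) k) = 1 := by
      rw [sum_normSq_conj_mulVec (eigU_mul_star hS.1)]
      have := conj_diag_eq_qfC (eigU hA) (1 : Matrix ι ι ℂ) j
      rw [conj_unit_diag hA] at this
      have h3 : qfC (1 : Matrix ι ι ℂ) u = star u ⬝ᵥ u := by
        unfold qfC
        rw [Matrix.one_mulVec]
      rw [← h3, ← this]
      rfl
    calc |∑ k, (singularValues A k * singularValues A k) *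
            Complex.normSq (((eigU hS.1)ᴴ *ᵥ u) k)|
        ≤ ∑ k, |(singularValues A k * singularValues A k)| *
            Complex.normSq (((eigU hS.1)ᴴ *ᵥ u) k) := by
          refine le_trans (Finset.abs_sum_le_sum_abs _ _) ?_
          refine Finset.sum_le_sum fun k _ => ?_
          rw [abs_mul, abs_of_nonneg (Complex.normSq_nonneg _)]
      _ ≤ ∑ k, s^2 * Complex.normSq (((eigU hS.1)ᴴ *ᵥ u) k) := by
          refine Finset.sum_le_sum fun k _ => ?_
          exact mul_le_mul_of_nonneg_right (hb k) (Complex.normSq_nonneg _)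
      _ = s^2 * ∑ k, Complex.normSq (((eigU hS.1)ᴴ *ᵥ u) k) := by
          rw [Finset.mul_sum]
      _ = s^2 := by rw [hun, mul_one]
  -- combine
  have h3 : (hA.eigenvalues j)^2 ≤ s^2 := by
    have h4 : qf (A * A) u = (hA.eigenvalues j)^2 := by
      unfold qf
      rw [show qfC (A * A) u = ((eigU hA)ᴴ * (A * A) * eigU hA) j j from
        (conj_diag_eq_qfC _ _ _).symm, h1]
      rw [show ((hA.eigenvalues j : ℂ))^2 = (((hA.eigenvalues j)^2 : ℝ) : ℂ) by push_cast; ring]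
      exact Complex.ofReal_re _
    rw [← h4, hAA]
    exact le_trans (le_abs_self _) h2
  calc |hA.eigenvalues j| = Real.sqrt ((hA.eigenvalues j)^2) := (Real.sqrt_sq_eq_abs _).symm
    _ ≤ Real.sqrt (s^2) := Real.sqrt_le_sqrt h3
    _ = s := Real.sqrt_sq hs0

lemma abs_qf_le_top (hA : A.IsHermitian) (v : ι → ℂ) :
    |qf A v| ≤ schattenNorm ⊤ A * (star v ⬝ᵥ v).re := by
  rcases isEmpty_or_nonempty ι with h|h
  · have h0 : qf A v = 0 := by
      unfold qf qfC dotProduct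
      rw [Finset.univ_eq_empty, Finset.sum_empty, Complex.zero_re]
    have h1 : (star v ⬝ᵥ v) = 0 := by
      unfold dotProduct
      rw [Finset.univ_eq_empty, Finset.sum_empty]
    rw [h0, h1]
    norm_num
  · have hqA : qf A v = ∑ k, hA.eigenvalues k * Complex.normSq (((eigU hA)ᴴ *ᵥ v) k) := by
      conv_lhs => rw [spectral_conjD hA]
      rw [qf_conjD]
    rw [hqA]
    calc |∑ k, hA.eigenvalues k * Complex.normSq (((eigU hA)ᴴ *ᵥ v) k)|
        ≤ ∑ k, |hA.eigenvalues k| * Complex.normSq (((eigU hA)ᴴ *ᵥ v) k) := by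
          refine le_trans (Finset.abs_sum_le_sum_abs _ _) ?_
          refine Finset.sum_le_sum fun k _ => ?_
          rw [abs_mul, abs_of_nonneg (Complex.normSq_nonneg _)]
      _ ≤ ∑ k, schattenNorm ⊤ A * Complex.normSq (((eigU hA)ᴴ *ᵥ v) k) := by
          refine Finset.sum_le_sum fun k _ => ?_
          exact mul_le_mul_of_nonneg_right (eig_abs_le_top hA k) (Complex.normSq_nonneg _)
      _ = schattenNorm ⊤ A * ∑ k, Complex.normSq (((eigU hA)ᴴ *ᵥ v) k) := by
          rw [Finset.mul_sum]
      _ = schattenNorm ⊤ A * (star v ⬝ᵥ v).re := by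
          rw [sum_normSq_conj_mulVec (eigU_mul_star hA)]

/-- trace duality against the spectral norm -/
lemma re_trace_mul_le_top {M : Matrix ι ι ℂ} (hA : A.IsHermitian) (hM : M.IsHermitian) :
    (trace (A * M)).re ≤ schattenNorm ⊤ A * ∑ i, |hM.eigenvalues i| := by
  rw [trace_mul_comm]
  conv_lhs => rw [spectral_conjD hM]
  rw [re_trace_conjD_mul]
  have hcol : ∀ i, (star (fun k => eigU hM k i) ⬝ᵥ (fun k => eigU hM k i)).re = 1 := by
    intro i
    have h3 : (star (fun k => eigU hM k i) ⬝ᵥ (fun k => eigU hM k i)) =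
        ((eigU hM)ᴴ * (1 : Matrix ι ι ℂ) * eigU hM) i i := by
      rw [conj_diag_eq_qfC]
      unfold qfC
      rw [Matrix.one_mulVec]
    rw [h3, conj_unit_diag hM]
    rfl
  rw [Finset.mul_sum]
  refine Finset.sum_le_sum fun i _ => ?_
  have h1 : |(((eigU hM)ᴴ * A * eigU hM) i i).re| ≤ schattenNorm ⊤ A := by
    rw [conj_diag_eq_qfC]
    refine le_trans (abs_qf_le_top hA _) ?_
    rw [hcol i, mul_one]
  calc hM.eigenvalues i * (((eigU hM)ᴴ * A * eigU hM) i i).re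
      ≤ |hM.eigenvalues i * (((eigU hM)ᴴ * A * eigU hM) i i).re| := le_abs_self _
    _ = |hM.eigenvalues i| * |(((eigU hM)ᴴ * A * eigU hM) i i).re| := abs_mul _ _
    _ ≤ |hM.eigenvalues i| * schattenNorm ⊤ A :=
        mul_le_mul_of_nonneg_left h1 (abs_nonneg _)
    _ = schattenNorm ⊤ A * |hM.eigenvalues i| := mul_comm _ _

end Top

section RealAux

lemma cs2_aux {g1 g2 a b dd : ℝ} (hg1 : 0 ≤ g1) (hg2 : 0 ≤ g2) (ha : 0 ≤ a) (hb : 0 ≤ b)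
    (hg : g1^2 + g2^2 ≤ dd) :
    g1 * a + g2 * b + g2 * b ≤ Real.sqrt dd * Real.sqrt (a^2 + 4*b^2) := by
  have hdd : 0 ≤ dd := le_trans (by positivity) hg
  have h1 : (g1*a + g2*b + g2*b)^2 ≤ (g1^2+g2^2)*(a^2+4*b^2) := by
    nlinarith [sq_nonneg (2*g1*b - g2*a)]
  have h2 : (g1^2+g2^2)*(a^2+4*b^2) ≤ dd*(a^2+4*b^2) :=
    mul_le_mul_of_nonneg_right hg (by positivity)
  have h0 : 0 ≤ g1*a + g2*b + g2*b := by positivity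
  calc g1*a + g2*b + g2*b = Real.sqrt ((g1*a + g2*b + g2*b)^2) := (Real.sqrt_sq h0).symm
    _ ≤ Real.sqrt (dd*(a^2+4*b^2)) := Real.sqrt_le_sqrt (le_trans h1 h2)
    _ = Real.sqrt dd * Real.sqrt (a^2+4*b^2) := Real.sqrt_mul hdd _

lemma num_aux {a b : ℝ} (ha : 0 ≤ a) (hab : a^2 + 2*b^2 ≤ 1) :
    Real.sqrt (a^2+4*b^2) ≤ 2 - a := by
  have haa : a ≤ 1 := by nlinarith [sq_nonneg b]
  have h2 : a^2+4*b^2 ≤ (2-a)^2 := by nlinarith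
  calc Real.sqrt (a^2+4*b^2) ≤ Real.sqrt ((2-a)^2) := Real.sqrt_le_sqrt h2
    _ = 2 - a := Real.sqrt_sq (by linarith)

end RealAux

section Main

variable {Y X : Matrix ι ι ℂ}

/-- The key bound: if `Y` is Hermitian with unit Frobenius norm and lies in the descent
cone of the nuclear norm at a Hermitian `X`, then `‖Y‖₁ ≤ 2 √(#nonzero eigenvalues of X)`. -/
lemma key_bound (hY : Y.IsHermitian) (hY2 : schattenNorm 2 Y = 1)
    (hX : X.IsHermitian) {τ : ℝ} (hτ : 0 < τ)
    (hdesc : schattenNorm 1 (X + (τ : ℂ) • Y) ≤ schattenNorm 1 X) :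
    schattenNorm 1 Y ≤
      2 * Real.sqrt (Fintype.card {i // hX.eigenvalues i ≠ 0}) := by
  classical
  set κ := hX.eigenvalues with hκ
  set V : Matrix ι ι ℂ := eigU hX with hV
  set E : Matrix ι ι ℂ := conjD V (fun i => sgn (κ i)) with hE
  set P : Matrix ι ι ℂ := conjD V (fun i => ind (κ i)) with hPdef
  set Q : Matrix ι ι ℂ := (1 : Matrix ι ι ℂ) - P with hQdef
  have hVV : Vᴴ * V = 1 := eigU_star_mul hX
  have hVV' : V * Vᴴ = 1 := eigU_mul_star hX
  -- projection algebra
  have hPherm : Pᴴ = P := conjD_isHermitian V _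
  have hQherm : Qᴴ = Q := by
    rw [hQdef, conjTranspose_sub, conjTranspose_one, hPherm]
  have hPP : P * P = P := by
    rw [hPdef, conjD_mul_conjD hVV]
    exact congrArg (conjD V) (funext fun i => ind_mul_ind _)
  have hQQ : Q * Q = Q := by
    rw [hQdef, sub_mul, mul_sub, mul_sub, hPP]
    simp only [Matrix.one_mul, Matrix.mul_one]
    abel
  have hPQ : P + Q = 1 := by rw [hQdef]; abel
  have hEP : E * P = E := by
    rw [hE, hPdef, conjD_mul_conjD hVV]
    exact congrArg (conjD V) (funext fun i => sgn_mul_ind _)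
  have hPE : P * E = E := by
    rw [hE, hPdef, conjD_mul_conjD hVV]
    exact congrArg (conjD V) (funext fun i => by
      rw [mul_comm]; exact sgn_mul_ind _)
  have hXP : X * P = X := by
    conv_lhs => rw [spectral_conjD hX, hPdef, conjD_mul_conjD hVV]
    conv_rhs => rw [spectral_conjD hX]
    exact congrArg (conjD V) (funext fun i => mul_ind _)
  have hXQ : X * Q = 0 := by
    rw [hQdef, mul_sub, Matrix.mul_one, hXP, sub_self]
  have hQX : Q * X = 0 := by
    have h := congrArg conjTranspose hXQ
    rw [conjTranspose_mul, hQherm, show Xᴴ = X from hX, conjTranspose_zero] at h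
    exact h
  -- the blocks
  set A0 : Matrix ι ι ℂ := P * Y * P with hA0def
  set B0 : Matrix ι ι ℂ := P * Y * Q with hB0def
  set B2 : Matrix ι ι ℂ := Q * Y * P with hB2def
  set C0 : Matrix ι ι ℂ := Q * Y * Q with hC0def
  have hYh : Yᴴ = Y := hY
  have hA0herm : A0.IsHermitian := by
    show A0ᴴ = A0
    rw [hA0def, conjTranspose_mul, conjTranspose_mul, hPherm, hYh, Matrix.mul_assoc]
  have hC0 : C0.IsHermitian := by
    show C0ᴴ = C0
    rw [hC0def, conjTranspose_mul, conjTranspose_mul, hQherm, hYh, Matrix.mul_assoc]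
  have hB20 : B2 = B0ᴴ := by
    rw [hB0def, conjTranspose_mul, conjTranspose_mul, hPherm, hQherm, hYh,
      ← Matrix.mul_assoc, hB2def]
  -- absorption
  have habs_PA0 : P * A0 = A0 := by
    rw [hA0def, ← Matrix.mul_assoc, ← Matrix.mul_assoc, hPP]
  have habs_A0P : A0 * P = A0 := by
    rw [hA0def, Matrix.mul_assoc, Matrix.mul_assoc, hPP, ← Matrix.mul_assoc]
  have habs_PB0 : P * B0 = B0 := by
    rw [hB0def, ← Matrix.mul_assoc, ← Matrix.mul_assoc, hPP]
  have habs_B0Q : B0 * Q = B0 := by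
    rw [hB0def, Matrix.mul_assoc, Matrix.mul_assoc, hQQ, ← Matrix.mul_assoc]
  have habs_QB2 : Q * B2 = B2 := by
    rw [hB2def, ← Matrix.mul_assoc, ← Matrix.mul_assoc, hQQ]
  have habs_B2P : B2 * P = B2 := by
    rw [hB2def, Matrix.mul_assoc, Matrix.mul_assoc, hPP, ← Matrix.mul_assoc]
  have habs_QC0 : Q * C0 = C0 := by
    rw [hC0def, ← Matrix.mul_assoc, ← Matrix.mul_assoc, hQQ]
  have habs_C0Q : C0 * Q = C0 := by
    rw [hC0def, Matrix.mul_assoc, Matrix.mul_assoc, hQQ, ← Matrix.mul_assoc]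
  have hdecomp : Y = A0 + B0 + B2 + C0 := by
    have h1 : Y = (P + Q) * Y * (P + Q) := by rw [hPQ, Matrix.one_mul, Matrix.mul_one]
    calc Y = (P + Q) * Y * (P + Q) := h1
      _ = A0 + B0 + B2 + C0 := by
          rw [add_mul, add_mul, mul_add, mul_add, hA0def, hB0def, hB2def, hC0def]
          abel
  -- numbers
  set d : ℕ := Fintype.card {i // κ i ≠ 0} with hd
  have hsum_ind : ∑ i, ind (κ i) = (d : ℝ) := by
    have h1 : ∀ x : ℝ, ind x = if x ≠ 0 then (1:ℝ) else 0 := by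
      intro x
      rcases eq_or_ne x 0 with h|h
      · simp [h, ind_zero_eq]
      · simp [h, ind_ne_eq x h]
    rw [hd]
    simp only [h1]
    rw [Finset.sum_boole, Fintype.card_subtype]
  -- dual certificate
  set W : Matrix ι ι ℂ := conjD (eigU hC0) (fun i => sgn (hC0.eigenvalues i)) with hWdef
  set G1 : Matrix ι ι ℂ := E + Q * W * Q with hG1def
  have hqf_G1 : ∀ v : ι → ℂ, |qf G1 v| ≤ (star v ⬝ᵥ v).re := by
    intro v
    have h1 : |qf E v| ≤ qf P v := by
      rw [hE, hPdef, qf_conjD, qf_conjD]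
      calc |∑ k, sgn (κ k) * Complex.normSq ((Vᴴ *ᵥ v) k)|
          ≤ ∑ k, |sgn (κ k) * Complex.normSq ((Vᴴ *ᵥ v) k)| := Finset.abs_sum_le_sum_abs _ _
        _ ≤ ∑ k, ind (κ k) * Complex.normSq ((Vᴴ *ᵥ v) k) := by
            refine Finset.sum_le_sum fun k _ => ?_
            rw [abs_mul, abs_of_nonneg (Complex.normSq_nonneg _)]
            exact mul_le_mul_of_nonneg_right (abs_sgn_le_ind _) (Complex.normSq_nonneg _)
    have h2 : |qf (Q * W * Q) v| ≤ qf Q v := by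
      rw [qf_sandwich hQherm, hWdef]
      have h2a := abs_qf_conjD_le (eigU_mul_star hC0)
        (fun k => abs_sgn_le (hC0.eigenvalues k)) (Q *ᵥ v)
      rw [dot_sandwich hQherm hQQ] at h2a
      exact h2a
    have h3 : qf P v + qf Q v = (star v ⬝ᵥ v).re := by
      rw [← qf_add, hPQ, qf_one]
    calc |qf G1 v| = |qf E v + qf (Q * W * Q) v| := by rw [hG1def, qf_add]
      _ ≤ |qf E v| + |qf (Q * W * Q) v| := abs_add_le _ _
      _ ≤ qf P v + qf Q v := add_le_add h1 h2
      _ = (star v ⬝ᵥ v).re := h3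
  have hXτY : (X + (τ : ℂ) • Y).IsHermitian := by
    show _ᴴ = _
    rw [conjTranspose_add, conjTranspose_smul, show Xᴴ = X from hX, hYh,
      Complex.star_def, Complex.conj_ofReal]
  have h_upper : (trace (G1 * (X + (τ : ℂ) • Y))).re ≤ schattenNorm 1 X := by
    refine le_trans ?_ hdesc
    rw [schattenNorm_one_herm hXτY]
    exact re_trace_mul_le hXτY hqf_G1
  have htrEX : (trace (E * X)).re = schattenNorm 1 X := by
    rw [schattenNorm_one_herm hX]
    have hEX : E * X = conjD V (fun i => sgn (κ i) * κ i) := by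
      conv_lhs => rw [hE, spectral_conjD hX, ← hV, ← hκ]
      rw [conjD_mul_conjD hVV]
    rw [hEX, trace_conjD hVV, Complex.re_sum]
    refine Finset.sum_congr rfl fun i _ => ?_
    rw [Complex.ofReal_re, sgn_mul_self_eq]
  have htrQWQX : trace ((Q * W * Q) * X) = 0 := by
    rw [Matrix.mul_assoc, hQX, Matrix.mul_zero, trace_zero]
  have htrG1X : (trace (G1 * X)).re = schattenNorm 1 X := by
    rw [hG1def, add_mul, trace_add, htrQWQX, add_zero, htrEX]
  have hlin : trace (G1 * (X + (τ : ℂ) • Y)) = trace (G1 * X) + (τ : ℂ) * trace (G1 * Y) := by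
    rw [mul_add, trace_add, mul_smul_comm, trace_smul, smul_eq_mul]
  have hG1Y_le : (trace (G1 * Y)).re ≤ 0 := by
    have h4 : (trace (G1 * X)).re + τ * (trace (G1 * Y)).re ≤ schattenNorm 1 X := by
      calc (trace (G1 * X)).re + τ * (trace (G1 * Y)).re
          = (trace (G1 * (X + (τ : ℂ) • Y))).re := by
            rw [hlin, Complex.add_re]
            congr 1
            simp [Complex.mul_re]
        _ ≤ schattenNorm 1 X := h_upper
    rw [htrG1X] at h4
    nlinarith
  have htrQWQY : (trace ((Q * W * Q) * Y)).re = ∑ i, |hC0.eigenvalues i| := by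
    have h1 : trace ((Q * W * Q) * Y) = trace (W * C0) := by
      rw [trace_sandwich Q W Q Y, ← hC0def]
    rw [h1, hWdef]
    exact re_trace_sgn_mul hC0
  have hSC_le : ∑ i, |hC0.eigenvalues i| ≤ -(trace (E * Y)).re := by
    have h5 : (trace (G1 * Y)).re = (trace (E * Y)).re + (trace ((Q * W * Q) * Y)).re := by
      rw [hG1def, add_mul, trace_add, Complex.add_re]
    rw [h5, htrQWQY] at hG1Y_le
    linarith
  -- bound -tr(EY) by √d * ‖A0‖_F
  have htrEY_eq : trace (E * Y) = trace (E * A0) := by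
    calc trace (E * Y) = trace (Y * E) := trace_mul_comm _ _
      _ = trace (Y * (P * E * P)) := by rw [hPE, hEP]
      _ = trace ((P * Y * P) * E) := (trace_sandwich P Y P E).symm
      _ = trace (E * A0) := by rw [← hA0def, trace_mul_comm]
  have hEherm : Eᴴ = E := conjD_isHermitian V _
  have hfroE : froSq E = (d : ℝ) := by
    have h1 : froSq E = (trace (Eᴴ * E)).re := (re_trace_conjTranspose_mul E).symm
    have h2 : E * E = conjD V (fun i => ind (κ i)) := by
      rw [hE, conjD_mul_conjD hVV]
      exact congrArg (conjD V) (funext fun i => sgn_mul_sgn _)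
    rw [h1, hEherm, h2, trace_conjD hVV, Complex.re_sum]
    rw [← hsum_ind]
    exact Finset.sum_congr rfl fun i _ => Complex.ofReal_re _
  have hEY_bound : -(trace (E * Y)).re ≤ Real.sqrt (d : ℝ) * Real.sqrt (froSq A0) := by
    have h1 : -(trace (E * Y)).re = (trace ((-E)ᴴ * A0)).re := by
      rw [conjTranspose_neg, hEherm, Matrix.neg_mul, trace_neg, Complex.neg_re,
        htrEY_eq]
    rw [h1]
    refine le_trans (re_trace_pair_le (-E) A0) ?_
    rw [froSq_neg, hfroE]
  -- the M0 block and its sign certificate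
  set M0 : Matrix ι ι ℂ := Y - C0 with hM0def
  have hM0 : M0.IsHermitian := by
    show M0ᴴ = M0
    rw [hM0def, conjTranspose_sub, hYh, show C0ᴴ = C0 from hC0]
  have hM0decomp : M0 = A0 + B0 + B2 := by
    rw [hM0def]
    conv_lhs => rw [hdecomp]
    abel
  set G : Matrix ι ι ℂ := conjD (eigU hM0) (fun i => sgn (hM0.eigenvalues i)) with hGdef
  have hGherm : Gᴴ = G := by rw [hGdef]; exact conjD_isHermitian _ _
  have hSM_eq : ∑ i, |hM0.eigenvalues i| = (trace (G * M0)).re := by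
    rw [hGdef]
    exact (re_trace_sgn_mul hM0).symm
  have htrsplit : (trace (G * M0)).re
      = (trace (G * A0)).re + (trace (G * B0)).re + (trace (G * B2)).re := by
    conv_lhs => rw [hM0decomp]
    rw [mul_add, mul_add, trace_add, trace_add, Complex.add_re, Complex.add_re]
  have hGB2 : (trace (G * B2)).re = (trace (G * B0)).re := by
    rw [hB20]
    have h2 : (B0 * Gᴴ)ᴴ = G * B0ᴴ := by
      rw [conjTranspose_mul, conjTranspose_conjTranspose]
    have h1 : trace (G * B0ᴴ) = star (trace (G * B0)) := by
      rw [← h2, trace_conjTranspose, hGherm, trace_mul_comm]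
    rw [h1, Complex.star_def, Complex.conj_re]
  -- pairing bounds
  have habs_PGP : P * (P * G * P) * P = P * G * P := by
    calc P * (P * G * P) * P = (P * P) * G * (P * P) := by
          simp only [Matrix.mul_assoc]
      _ = P * G * P := by rw [hPP]
  have habs_PGQ : P * (P * G * Q) * Q = P * G * Q := by
    calc P * (P * G * Q) * Q = (P * P) * G * (Q * Q) := by
          simp only [Matrix.mul_assoc]
      _ = P * G * Q := by rw [hPP, hQQ]
  have htrGA0 : trace (G * A0) = trace ((P * G * P)ᴴ * A0) := by
    have habs3 : P * A0 * P = A0 := by rw [habs_PA0, habs_A0P]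
    rw [conj_three hPherm hGherm hPherm, trace_sandwich P G P A0, habs3]
  have htrGB0 : trace (G * B0) = trace ((P * G * Q)ᴴ * B0) := by
    have habs4 : P * B0 * Q = B0 := by rw [habs_PB0, habs_B0Q]
    rw [conj_three hPherm hGherm hQherm, trace_sandwich Q G P B0, habs4]
  have bound1 : (trace (G * A0)).re
      ≤ Real.sqrt (froSq (P * G * P)) * Real.sqrt (froSq A0) := by
    rw [htrGA0]; exact re_trace_pair_le _ _
  have bound2 : (trace (G * B0)).re
      ≤ Real.sqrt (froSq (P * G * Q)) * Real.sqrt (froSq B0) := by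
    rw [htrGB0]; exact re_trace_pair_le _ _
  -- the Pythagoras bound on the certificate blocks
  have hqfP_nonneg : ∀ v : ι → ℂ, 0 ≤ qf P v := by
    intro v
    rw [hPdef, qf_conjD]
    exact Finset.sum_nonneg fun k _ => mul_nonneg (ind_nonneg _) (Complex.normSq_nonneg _)
  have hfro_blocks : froSq (P * G * P) + froSq (P * G * Q) ≤ (d : ℝ) := by
    have e1 : froSq (P * G * P) = (trace (G * (P * G * P))).re := by
      rw [← re_trace_conjTranspose_mul, conj_three hPherm hGherm hPherm,
        trace_sandwich P G P (P * G * P), habs_PGP]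
    have e2 : froSq (P * G * Q) = (trace (G * (P * G * Q))).re := by
      rw [← re_trace_conjTranspose_mul, conj_three hPherm hGherm hQherm,
        trace_sandwich Q G P (P * G * Q), habs_PGQ]
    have e4 : P * G * P + P * G * Q = P * G := by
      rw [← mul_add, hPQ, Matrix.mul_one]
    have e3 : trace (G * (P * G * P)) + trace (G * (P * G * Q))
        = trace ((G * G) * P) := by
      rw [← trace_add, ← mul_add, e4]
      calc trace (G * (P * G)) = trace ((P * G) * G) := trace_mul_comm _ _
        _ = trace (P * (G * G)) := by rw [Matrix.mul_assoc]
        _ = trace ((G * G) * P) := trace_mul_comm _ _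
    set U2 : Matrix ι ι ℂ := eigU hM0 with hU2
    have hGG : G * G = conjD U2 (fun i => ind (hM0.eigenvalues i)) := by
      rw [hGdef, hU2, conjD_mul_conjD (eigU_star_mul hM0)]
      exact congrArg _ (funext fun i => sgn_mul_sgn _)
    have e5 : (trace ((G * G) * P)).re
        = ∑ k, ind (hM0.eigenvalues k) * ((U2ᴴ * P * U2) k k).re := by
      rw [hGG, re_trace_conjD_mul]
    have e6 : ∀ k, 0 ≤ ((U2ᴴ * P * U2) k k).re := by
      intro k
      rw [conj_diag_eq_qfC]
      exact hqfP_nonneg _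
    have e7 : ∑ k, ((U2ᴴ * P * U2) k k).re = (d : ℝ) := by
      have f1 : ∑ k, ((U2ᴴ * P * U2) k k) = trace (U2ᴴ * P * U2) := by
        simp [Matrix.trace, Matrix.diag]
      have f2 : trace (U2ᴴ * P * U2) = trace P := by
        calc trace (U2ᴴ * P * U2) = trace (U2 * (U2ᴴ * P)) := trace_mul_comm _ _
          _ = trace ((U2 * U2ᴴ) * P) := by rw [Matrix.mul_assoc]
          _ = trace P := by rw [eigU_mul_star hM0, Matrix.one_mul]
      have f3 : (trace P).re = (d : ℝ) := by
        rw [hPdef, trace_conjD hVV, Complex.re_sum, ← hsum_ind]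
        exact Finset.sum_congr rfl fun i _ => Complex.ofReal_re _
      rw [← Complex.re_sum, f1, f2, f3]
    have e8 : (trace ((G * G) * P)).re ≤ (d : ℝ) := by
      rw [e5, ← e7]
      refine Finset.sum_le_sum fun k _ => ?_
      exact mul_le_of_le_one_left (e6 k) (ind_le_one _)
    have e9 : (trace (G * (P * G * P))).re + (trace (G * (P * G * Q))).re
        = (trace ((G * G) * P)).re := by
      rw [← Complex.add_re, e3]
    rw [e1, e2, e9]
    exact e8
  -- Pythagoras for the blocks of Y
  have hfroY : froSq Y = 1 := by
    have h := schattenNorm_two_eq Y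
    rw [hY2] at h
    exact Real.sqrt_eq_one.mp h.symm
  have habs3 : P * A0 * P = A0 := by rw [habs_PA0, habs_A0P]
  have habs4 : P * B0 * Q = B0 := by rw [habs_PB0, habs_B0Q]
  have habs5 : Q * B2 * P = B2 := by rw [habs_QB2, habs_B2P]
  have habs6 : Q * C0 * Q = C0 := by rw [habs_QC0, habs_C0Q]
  have eA : froSq A0 = (trace (Y * A0)).re := by
    rw [← re_trace_conjTranspose_mul, show A0ᴴ = A0 from hA0herm]
    have h1 : (P * Y * P) * A0 = A0 * A0 := by rw [← hA0def]
    rw [← h1, trace_sandwich P Y P A0, habs3]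
  have eB0 : froSq B0 = (trace (Y * B0)).re := by
    rw [← re_trace_conjTranspose_mul, show B0ᴴ = B2 from hB20.symm]
    have h1 : (Q * Y * P) * B0 = B2 * B0 := by rw [← hB2def]
    rw [← h1, trace_sandwich Q Y P B0, habs4]
  have eB2 : froSq B2 = (trace (Y * B2)).re := by
    rw [← re_trace_conjTranspose_mul,
      show B2ᴴ = B0 from by rw [hB20, conjTranspose_conjTranspose]]
    have h1 : (P * Y * Q) * B2 = B0 * B2 := by rw [← hB0def]
    rw [← h1, trace_sandwich P Y Q B2, habs5]
  have eC : froSq C0 = (trace (Y * C0)).re := by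
    rw [← re_trace_conjTranspose_mul, show C0ᴴ = C0 from hC0]
    have h1 : (Q * Y * Q) * C0 = C0 * C0 := by rw [← hC0def]
    rw [← h1, trace_sandwich Q Y Q C0, habs6]
  have hsumfro : froSq A0 + froSq B0 + froSq B2 + froSq C0 = 1 := by
    rw [eA, eB0, eB2, eC, ← Complex.add_re, ← Complex.add_re, ← Complex.add_re,
      ← trace_add, ← trace_add, ← trace_add, ← mul_add, ← mul_add, ← mul_add,
      ← hdecomp, show Y * Y = Yᴴ * Y from by rw [hYh],
      re_trace_conjTranspose_mul, hfroY]
  set a : ℝ := Real.sqrt (froSq A0) with hadef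
  set b : ℝ := Real.sqrt (froSq B0) with hbdef
  have ha_nonneg : 0 ≤ a := Real.sqrt_nonneg _
  have hb_nonneg : 0 ≤ b := Real.sqrt_nonneg _
  have ha2 : a^2 = froSq A0 := Real.sq_sqrt (froSq_nonneg _)
  have hb2 : b^2 = froSq B0 := Real.sq_sqrt (froSq_nonneg _)
  have hB2eq : froSq B2 = froSq B0 := by rw [hB20, froSq_conjTranspose]
  have hab : a^2 + 2*b^2 ≤ 1 := by
    have h1 := froSq_nonneg C0
    rw [ha2, hb2]
    rw [hB2eq] at hsumfro
    linarith
  set g1 : ℝ := Real.sqrt (froSq (P * G * P)) with hg1def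
  set g2 : ℝ := Real.sqrt (froSq (P * G * Q)) with hg2def
  have hg : g1^2 + g2^2 ≤ (d : ℝ) := by
    rw [hg1def, hg2def, Real.sq_sqrt (froSq_nonneg _), Real.sq_sqrt (froSq_nonneg _)]
    exact hfro_blocks
  have hg1_nonneg : 0 ≤ g1 := Real.sqrt_nonneg _
  have hg2_nonneg : 0 ≤ g2 := Real.sqrt_nonneg _
  clear_value a b g1 g2
  have hSM_le : ∑ i, |hM0.eigenvalues i| ≤ Real.sqrt d * Real.sqrt (a^2 + 4*b^2) := by
    rw [hSM_eq, htrsplit, hGB2]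
    calc (trace (G * A0)).re + (trace (G * B0)).re + (trace (G * B0)).re
        ≤ g1 * a + g2 * b + g2 * b := add_le_add (add_le_add bound1 bound2) bound2
      _ ≤ Real.sqrt d * Real.sqrt (a^2+4*b^2) :=
          cs2_aux hg1_nonneg hg2_nonneg ha_nonneg hb_nonneg hg
  have hSC_le2 : ∑ i, |hC0.eigenvalues i| ≤ Real.sqrt d * a :=
    le_trans hSC_le hEY_bound
  have hsplitY : schattenNorm 1 Y
      ≤ (∑ i, |hM0.eigenvalues i|) + ∑ i, |hC0.eigenvalues i| := by
    rw [schattenNorm_one_herm hY]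
    set sY : Matrix ι ι ℂ := conjD (eigU hY) (fun i => sgn (hY.eigenvalues i)) with hsYdef
    have h0 : ∑ i, |hY.eigenvalues i| = (trace (sY * Y)).re := by
      rw [hsYdef]
      exact (re_trace_sgn_mul hY).symm
    have hYsplit : Y = M0 + C0 := by rw [hM0def, sub_add_cancel]
    have h1 : (trace (sY * Y)).re = (trace (sY * M0)).re + (trace (sY * C0)).re := by
      conv_lhs => rw [hYsplit]
      rw [mul_add, trace_add, Complex.add_re]
    have hqf_sY : ∀ v : ι → ℂ, |qf sY v| ≤ (star v ⬝ᵥ v).re := by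
      intro v
      rw [hsYdef]
      exact abs_qf_conjD_le (eigU_mul_star hY) (fun k => abs_sgn_le _) v
    rw [h0, h1]
    exact add_le_add (re_trace_mul_le hM0 hqf_sY) (re_trace_mul_le hC0 hqf_sY)
  -- numeric finish
  have hnum : Real.sqrt (a^2+4*b^2) ≤ 2 - a := num_aux ha_nonneg hab
  have hfinal : schattenNorm 1 Y ≤ 2 * Real.sqrt d := by
    calc schattenNorm 1 Y
        ≤ (∑ i, |hM0.eigenvalues i|) + ∑ i, |hC0.eigenvalues i| := hsplitY
      _ ≤ Real.sqrt d * Real.sqrt (a^2+4*b^2) + Real.sqrt d * a :=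
          add_le_add hSM_le hSC_le2
      _ ≤ Real.sqrt d * (2 - a) + Real.sqrt d * a :=
          add_le_add_left (mul_le_mul_of_nonneg_left hnum (Real.sqrt_nonneg _)) _
      _ = 2 * Real.sqrt d := by ring
  exact hfinal

end Main

end NucAux


end NucAux


/-- The descent cone of the nuclear norm at a Hermitian matrix `X`:
`D(‖·‖_1, X) = ∪_{τ>0} {Y : ‖X + τY‖_1 ≤ ‖X‖_1}`. -/
def nuclearDescentCone {n : ℕ} (X : Matrix (Fin n) (Fin n) ℂ) :
    Set (Matrix (Fin n) (Fin n) ℂ) :=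
  {Y | ∃ τ : ℝ, 0 < τ ∧ schattenNorm 1 (X + (τ : ℂ) • Y) ≤ schattenNorm 1 X}

/-- `E_r`: the set of unit Frobenius norm Hermitian matrices lying in the descent cone of the
nuclear norm at some nonzero Hermitian matrix of rank at most `r`. -/
def Er (n r : ℕ) : Set (Matrix (Fin n) (Fin n) ℂ) :=
  {Y | Y.IsHermitian ∧ schattenNorm 2 Y = 1 ∧
    ∃ X : Matrix (Fin n) (Fin n) ℂ, X.IsHermitian ∧ X ≠ 0 ∧ X.rank ≤ r ∧
      Y ∈ nuclearDescentCone X}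

lemma Er_schatten_one_bound (n r : ℕ) :
    ∀ Y ∈ Er n r, schattenNorm 1 Y ≤ 2 * Real.sqrt r := by
  rintro Y ⟨hY, hY2, X, hX, hX0, hXr, τ, hτ, hdesc⟩
  have h1 := NucAux.key_bound hY hY2 hX hτ hdesc
  refine le_trans h1 ?_
  have h2 : ((Fintype.card {i // hX.eigenvalues i ≠ 0} : ℕ) : ℝ) ≤ (r : ℝ) := by
    have h3 : Fintype.card {i // hX.eigenvalues i ≠ 0} ≤ r := by
      rw [← hX.rank_eq_card_non_zero_eigs]
      exact hXr
    exact_mod_cast h3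
  have h4 := Real.sqrt_le_sqrt h2
  linarith

/-- Every `Y ∈ E_r` satisfies `‖Y‖_1 ≤ 2√r`; equivalently, for every Hermitian `A`,
`sup_{Y ∈ E_r} tr(AY) ≤ 2√r ‖A‖_∞`. -/
theorem nuclearNorm_bound_on_descent_cone (n r : ℕ) :
    (∀ Y ∈ Er n r, schattenNorm 1 Y ≤ 2 * Real.sqrt r) ∧
      ∀ A : Matrix (Fin n) (Fin n) ℂ, A.IsHermitian →
        ∀ Y ∈ Er n r, ((A * Y).trace).re ≤ 2 * Real.sqrt r * schattenNorm ⊤ A := by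
  refine ⟨Er_schatten_one_bound n r, ?_⟩
  intro A hA Y hYmem
  have hbound := Er_schatten_one_bound n r Y hYmem
  obtain ⟨hY, hY2, X, hX, hX0, hXr, τ, hτ, hdesc⟩ := hYmem
  have hfro1 : NucAux.froSq Y = 1 := by
    have h := NucAux.schattenNorm_two_eq Y
    rw [hY2] at h
    exact Real.sqrt_eq_one.mp h.symm
  have hn : Nonempty (Fin n) := by
    by_contra h
    rw [not_nonempty_iff] at h
    have h0 : NucAux.froSq Y = 0 := by
      unfold NucAux.froSq
      rw [Finset.univ_eq_empty, Finset.sum_empty]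
    rw [h0] at hfro1
    norm_num at hfro1
  calc ((A * Y).trace).re
      ≤ schattenNorm ⊤ A * ∑ i, |hY.eigenvalues i| := NucAux.re_trace_mul_le_top hA hY
    _ = schattenNorm ⊤ A * schattenNorm 1 Y := by rw [NucAux.schattenNorm_one_herm hY]
    _ ≤ schattenNorm ⊤ A * (2 * Real.sqrt r) :=
        mul_le_mul_of_nonneg_left hbound (NucAux.schattenNorm_top_nonneg A)
    _ = 2 * Real.sqrt r * schattenNorm ⊤ A := mul_comm _ _
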